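/- With D, Π, E as above, for any r×r complex matrices S, T: p_r(S − T) ≥ p_N(E(S) − E(T)) ≥ (r/N) · p_r(S − T), where p_m(C) = min_{1 ≤ i ≤ m+1}( (i−1)/m + σ_i(C) ) denotes the a.c.s. modulus for m×m matrices (with σ_{m+1} = 0). -/

import Mathlib

open Matrix Polynomial

/-- The `r×N` selection matrix `Π` with `Π_{k,j} = δ_{j, φ k}`. -/
def Pmat (N r : ℕ) (φ : Fin r → Fin N) : Matrix (Fin r) (Fin N) ℂ :=
  Matrix.of fun k j => if φ k = j then 1 else 0

/-- The extension operator `E(S) = Πᵀ S Π`. -/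
noncomputable def Eop (N r : ℕ) (φ : Fin r → Fin N) (S : Matrix (Fin r) (Fin r) ℂ) :
    Matrix (Fin N) (Fin N) ℂ :=
  (Pmat N r φ)ᵀ * S * Pmat N r φ

/-- The singular values of a square complex matrix, listed in decreasing order. -/
noncomputable def sv {m : ℕ} (A : Matrix (Fin m) (Fin m) ℂ) : Fin m → ℝ :=
  fun i =>
    Real.sqrt ((Matrix.isHermitian_conjTranspose_mul_self A).eigenvalues
      (Tuple.sort (Matrix.isHermitian_conjTranspose_mul_self A).eigenvalues i.rev))

/-- The a.c.s. modulus `p_m(C) = min_{1 ≤ i ≤ m+1} ((i−1)/m + σ_i(C))`, with the convention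
`σ_{m+1}(C) = 0`, for an `m×m` complex matrix `C`. -/
noncomputable def acsP {m : ℕ} (C : Matrix (Fin m) (Fin m) ℂ) : ℝ :=
  ⨅ i : Fin (m + 1),
    (((i : ℕ) : ℝ) / m + if h : (i : ℕ) < m then sv C ⟨(i : ℕ), h⟩ else 0)

section Helpers

lemma charpoly_unitary_conj {n : Type*} [Fintype n] [DecidableEq n]
    (U A : Matrix n n ℂ) (hU : U ∈ Matrix.unitaryGroup n ℂ) :
    (U * A * star U).charpoly = A.charpoly := by
  have h1 : U * star U = 1 := Matrix.mem_unitaryGroup_iff.mp hU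
  let mc : Matrix n n ℂ →+* Matrix n n ℂ[X] := (Polynomial.C : ℂ →+* ℂ[X]).mapMatrix
  have hs : mc U * Matrix.scalar n (X : ℂ[X]) * mc (star U) = Matrix.scalar n (X : ℂ[X]) := by
    have hcomm : mc U * Matrix.scalar n (X : ℂ[X]) = Matrix.scalar n (X : ℂ[X]) * mc U :=
      (Matrix.scalar_commute (X : ℂ[X]) (fun r => Commute.all _ _) (mc U)).symm
    rw [hcomm, mul_assoc, ← _root_.map_mul, h1, mc.map_one, mul_one]
  have key : charmatrix (U * A * star U) = mc U * charmatrix A * mc (star U) := by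
    unfold charmatrix
    rw [mul_sub, sub_mul, hs, _root_.map_mul, _root_.map_mul]
  have h2 : (U * A * star U).charpoly = (mc U).det * A.charpoly * (mc (star U)).det := by
    rw [Matrix.charpoly, key, det_mul, det_mul, Matrix.charpoly]
  rw [h2, mul_comm ((mc U).det), mul_assoc, ← det_mul, ← _root_.map_mul, h1, mc.map_one, det_one,
    mul_one]

lemma herm_charpoly {n : Type*} [Fintype n] [DecidableEq n] [LinearOrder n]
    {A : Matrix n n ℂ} (hA : A.IsHermitian) :
    A.charpoly = ∏ i, (X - C ((hA.eigenvalues i : ℂ))) := by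
  conv_lhs => rw [hA.spectral_theorem, Unitary.conjStarAlgAut_apply]
  rw [charpoly_unitary_conj _ _ (SetLike.coe_mem _),
    Matrix.charpoly_of_upperTriangular _ (Matrix.blockTriangular_diagonal _)]
  simp

variable {N r : ℕ} {φ : Fin r → Fin N}

lemma Eop_apply (M : Matrix (Fin r) (Fin r) ℂ) (i j : Fin N) :
    Eop N r φ M i j = ∑ a, ∑ b, (if φ a = i then 1 else 0) * M a b * (if φ b = j then 1 else 0) := by
  simp only [Eop, Matrix.mul_apply, Pmat, transpose_apply, of_apply, Finset.sum_mul,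
    Finset.mul_sum]
  rw [Finset.sum_comm]

lemma Eop_apply_mem (hφ : Function.Injective φ) (M : Matrix (Fin r) (Fin r) ℂ) (k l : Fin r) :
    Eop N r φ M (φ k) (φ l) = M k l := by
  rw [Eop_apply]
  simp [hφ.eq_iff]

lemma Eop_apply_not_mem_left (M : Matrix (Fin r) (Fin r) ℂ) {i : Fin N} (hi : i ∉ Set.range φ)
    (j : Fin N) : Eop N r φ M i j = 0 := by
  rw [Eop_apply]
  apply Finset.sum_eq_zero
  intro a _
  have : ¬ (φ a = i) := fun h => hi ⟨a, h⟩
  simp [this]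

lemma Eop_apply_not_mem_right (M : Matrix (Fin r) (Fin r) ℂ) (i : Fin N) {j : Fin N}
    (hj : j ∉ Set.range φ) : Eop N r φ M i j = 0 := by
  rw [Eop_apply]
  apply Finset.sum_eq_zero
  intro a _
  apply Finset.sum_eq_zero
  intro b _
  have : ¬ (φ b = j) := fun h => hj ⟨b, h⟩
  simp [this]

lemma Eop_charpoly (hφ : Function.Injective φ) (M : Matrix (Fin r) (Fin r) ℂ) :
    (Eop N r φ M).charpoly = M.charpoly * X ^ (N - r) := by
  classical
  have hrN : r ≤ N := by
    simpa using Fintype.card_le_of_injective φ hφ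
  have hcard : Fintype.card ↥((Set.range φ)ᶜ) = N - r := by
    rw [Fintype.card_compl_set, Set.card_range_of_injective hφ]
    simp
  let e2 : Fin (N - r) ≃ ↥((Set.range φ)ᶜ) := (Fintype.equivFinOfCardEq hcard).symm
  let e : Fin r ⊕ Fin (N - r) ≃ Fin N :=
    (Equiv.sumCongr (Equiv.ofInjective φ hφ) e2).trans (Equiv.Set.sumCompl (Set.range φ))
  have hl : ∀ k : Fin r, e (Sum.inl k) = φ k := fun k => by simp [e]
  have hr : ∀ k : Fin (N - r), e (Sum.inr k) = (e2 k : Fin N) := fun k => by simp [e]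
  have hre : reindex e.symm e.symm (Eop N r φ M) =
      fromBlocks M 0 0 (0 : Matrix (Fin (N - r)) (Fin (N - r)) ℂ) := by
    ext x y
    simp only [reindex_apply, submatrix_apply, Equiv.symm_symm]
    cases x with
    | inl k =>
      cases y with
      | inl l =>
        rw [hl, hl, Eop_apply_mem hφ]; rfl
      | inr l =>
        rw [hr, Eop_apply_not_mem_right _ _ ((e2 l).2)]; rfl
    | inr k =>
      rw [hr, Eop_apply_not_mem_left _ ((e2 k).2)]
      cases y <;> rfl
  have h3 := Matrix.charpoly_reindex e.symm (Eop N r φ M)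
  rw [← h3, hre, Matrix.charpoly_fromBlocks_zero₂₁,
    Matrix.charpoly_of_upperTriangular _ (Matrix.blockTriangular_zero)]
  simp

lemma Pmat_mul_transpose (hφ : Function.Injective φ) : Pmat N r φ * (Pmat N r φ)ᵀ = 1 := by
  ext k l
  simp [Pmat, Matrix.mul_apply, Matrix.one_apply, hφ.eq_iff]

lemma Pmat_conjTranspose : (Pmat N r φ)ᴴ = (Pmat N r φ)ᵀ := by
  ext j k
  simp [Pmat, Matrix.conjTranspose_apply, apply_ite]

lemma Eop_conjT_mul (hφ : Function.Injective φ) (C : Matrix (Fin r) (Fin r) ℂ) :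
    (Eop N r φ C)ᴴ * (Eop N r φ C) = Eop N r φ (Cᴴ * C) := by
  have hPt : ((Pmat N r φ)ᵀ)ᴴ = Pmat N r φ := by
    ext j k
    simp [Pmat, Matrix.conjTranspose_apply, apply_ite]
  unfold Eop
  simp only [conjTranspose_mul, Pmat_conjTranspose, hPt]
  rw [← Matrix.mul_assoc]
  have hmid : ∀ (X : Matrix (Fin r) (Fin N) ℂ),
      Pmat N r φ * ((Pmat N r φ)ᵀ * X) = X := fun X => by
    rw [← Matrix.mul_assoc, Pmat_mul_transpose hφ, Matrix.one_mul]
  simp only [Matrix.mul_assoc, hmid]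

lemma pad_multiset (N r : ℕ) (μ : Fin N → ℝ) (ν : Fin r → ℝ)
    (h : ∏ i, (X - C ((μ i : ℂ))) = (∏ j, (X - C ((ν j : ℂ)))) * X ^ (N - r)) :
    Multiset.map μ Finset.univ.val =
      Multiset.replicate (N - r) 0 + Multiset.map ν Finset.univ.val := by
  have e1 : (fun i : Fin N => X - C ((μ i : ℂ))) =
      (fun a : ℂ => X - C a) ∘ (fun i => ((μ i : ℂ))) := rfl
  have e2 : (fun j : Fin r => X - C ((ν j : ℂ))) =
      (fun a : ℂ => X - C a) ∘ (fun j => ((ν j : ℂ))) := rfl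
  have hroots := congrArg Polynomial.roots h
  have hne : (∏ j, (X - C ((ν j : ℂ)))) ≠ 0 := by
    apply Finset.prod_ne_zero_iff.mpr
    intro j _
    exact Polynomial.X_sub_C_ne_zero _
  have hne2 : (X : ℂ[X]) ^ (N - r) ≠ 0 := pow_ne_zero _ Polynomial.X_ne_zero
  rw [Finset.prod_eq_multiset_prod, e1, ← Multiset.map_map,
    roots_multiset_prod_X_sub_C, Polynomial.roots_mul (mul_ne_zero hne hne2),
    Finset.prod_eq_multiset_prod, e2, ← Multiset.map_map,
    roots_multiset_prod_X_sub_C, roots_pow, roots_X] at hroots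
  have h3 : Multiset.map (fun x : ℝ => (x : ℂ)) (Multiset.map μ Finset.univ.val) =
      Multiset.map (fun x : ℝ => (x : ℂ))
        (Multiset.replicate (N - r) 0 + Multiset.map ν Finset.univ.val) := by
    simp only [Multiset.map_add, Multiset.map_map, Multiset.map_replicate]
    rw [add_comm]
    rw [Multiset.nsmul_singleton] at hroots
    simpa [Function.comp_def] using hroots
  exact Multiset.map_injective (fun a b hab => by exact_mod_cast hab) h3

lemma ofFn_coe_multiset {n : ℕ} (f : Fin n → ℝ) :
    (↑(List.ofFn f) : Multiset ℝ) = Multiset.map f Finset.univ.val := by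
  rw [List.ofFn_eq_map, Fin.univ_def]
  simp [Multiset.map_coe]

lemma pad_sorted {N r : ℕ} (hrN : r ≤ N) (g : Fin N → ℝ) (h : Fin r → ℝ)
    (hg : Monotone g) (hh : Monotone h) (hh0 : ∀ j, 0 ≤ h j)
    (heq : Multiset.map g Finset.univ.val =
      Multiset.replicate (N - r) 0 + Multiset.map h Finset.univ.val) :
    ∀ i : Fin N, g i =
      if hi : (i : ℕ) < N - r then 0 else h ⟨(i : ℕ) - (N - r), by omega⟩ := by
  intro i
  set p : Fin N → ℝ := fun i =>
    if hi : (i : ℕ) < N - r then 0 else h ⟨(i : ℕ) - (N - r), by omega⟩ with hp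
  have hlist : List.ofFn p = List.replicate (N - r) 0 ++ List.ofFn h := by
    apply List.ext_getElem
    · simp; omega
    · intro k h1 h2
      rw [List.getElem_ofFn]
      by_cases hk : k < N - r
      · rw [List.getElem_append_left (by simpa using hk), List.getElem_replicate]
        simp only [hp]
        rw [dif_pos hk]
      · rw [List.getElem_append_right (by simpa using hk)]
        rw [List.getElem_ofFn]
        simp only [hp]
        rw [dif_neg hk]
        simp
  have hpmono : Monotone p := by
    intro a b hab
    simp only [hp]
    by_cases ha : (a : ℕ) < N - r
    · rw [dif_pos ha]
      by_cases hb : (b : ℕ) < N - r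
      · rw [dif_pos hb]
      · rw [dif_neg hb]; exact hh0 _
    · have hb : ¬ (b : ℕ) < N - r := by omega
      rw [dif_neg ha, dif_neg hb]
      exact hh (by simp [Fin.le_def]; omega)
  have hperm : (List.ofFn g).Perm (List.ofFn p) := by
    rw [← Multiset.coe_eq_coe, hlist, ofFn_coe_multiset, heq]
    simp [← ofFn_coe_multiset, ← Multiset.coe_replicate]
  have hsg : (List.ofFn g).Pairwise (· ≤ ·) := (List.sortedLE_ofFn_iff.mpr hg).pairwise
  have hsp : (List.ofFn p).Pairwise (· ≤ ·) := (List.sortedLE_ofFn_iff.mpr hpmono).pairwise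
  have : g = p := List.ofFn_injective (List.Perm.eq_of_pairwise' hsg hsp hperm)
  rw [this]

lemma perm_multiset_map {n : ℕ} (f : Fin n → ℝ) (σ : Equiv.Perm (Fin n)) :
    Multiset.map (f ∘ σ) Finset.univ.val = Multiset.map f Finset.univ.val := by
  rw [← Multiset.map_map]
  congr 1
  have h := Finset.map_univ_equiv σ
  calc Multiset.map (⇑σ) Finset.univ.val = (Finset.map σ.toEmbedding Finset.univ).val := rfl
    _ = Finset.univ.val := by rw [h]

open scoped ComplexOrder in
lemma sv_Eop (hrN : r ≤ N) (hφ : Function.Injective φ) (A : Matrix (Fin r) (Fin r) ℂ) :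
    (∀ (i : ℕ) (hi : i < r),
        sv (Eop N r φ A) ⟨i, lt_of_lt_of_le hi hrN⟩ = sv A ⟨i, hi⟩) ∧
      (∀ i : Fin N, r ≤ (i : ℕ) → sv (Eop N r φ A) i = 0) := by
  have hB := Matrix.isHermitian_conjTranspose_mul_self (Eop N r φ A)
  have hM := Matrix.isHermitian_conjTranspose_mul_self A
  have hchar : ((Eop N r φ A)ᴴ * (Eop N r φ A)).charpoly = (Aᴴ * A).charpoly * X ^ (N - r) := by
    rw [Eop_conjT_mul hφ A]
    exact Eop_charpoly hφ _
  have hprod : ∏ i, (X - C ((hB.eigenvalues i : ℂ))) =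
      (∏ j, (X - C ((hM.eigenvalues j : ℂ)))) * X ^ (N - r) := by
    rw [← herm_charpoly hB, ← herm_charpoly hM]
    exact hchar
  have hmult := pad_multiset N r hB.eigenvalues hM.eigenvalues hprod
  set g : Fin N → ℝ := hB.eigenvalues ∘ ⇑(Tuple.sort hB.eigenvalues) with hgdef
  set h : Fin r → ℝ := hM.eigenvalues ∘ ⇑(Tuple.sort hM.eigenvalues) with hhdef
  have hgm : Monotone g := Tuple.monotone_sort _
  have hhm : Monotone h := Tuple.monotone_sort _
  have hh0 : ∀ j, 0 ≤ h j := fun j =>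
    (Matrix.posSemidef_conjTranspose_mul_self A).eigenvalues_nonneg _
  have heq : Multiset.map g Finset.univ.val =
      Multiset.replicate (N - r) 0 + Multiset.map h Finset.univ.val := by
    rw [hgdef, hhdef, perm_multiset_map, perm_multiset_map]
    exact hmult
  have hdich := pad_sorted hrN g h hgm hhm hh0 heq
  have hsvB : ∀ i : Fin N, sv (Eop N r φ A) i = Real.sqrt (g i.rev) := fun i => rfl
  have hsvC : ∀ i : Fin r, sv A i = Real.sqrt (h i.rev) := fun i => rfl
  constructor
  · intro i hi
    rw [hsvB, hsvC]
    have h1 := hdich (⟨i, lt_of_lt_of_le hi hrN⟩ : Fin N).rev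
    have hv : ((⟨i, lt_of_lt_of_le hi hrN⟩ : Fin N).rev : ℕ) = N - 1 - i := by
      simp [Fin.val_rev]; omega
    rw [h1]
    have hnot : ¬ ((⟨i, lt_of_lt_of_le hi hrN⟩ : Fin N).rev : ℕ) < N - r := by
      rw [hv]; omega
    rw [dif_neg hnot]
    congr 1
    exact congrArg h (Fin.ext (by simp [Fin.val_rev, hv]; omega))
  · intro i hi
    rw [hsvB]
    have h1 := hdich i.rev
    have hlt : ((i.rev : Fin N) : ℕ) < N - r := by
      have := i.2
      simp [Fin.val_rev]
      omega
    rw [h1, dif_pos hlt, Real.sqrt_zero]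

end Helpers

/-- Two-sided comparison of the a.c.s. modulus under extension:
`p_r(S − T) ≥ p_N(E(S) − E(T)) ≥ (r/N) · p_r(S − T)`. -/
theorem acs_modulus_extension (N r : ℕ) (hr : 0 < r)
    (φ : Fin r → Fin N) (hφ : StrictMono φ)
    (S T : Matrix (Fin r) (Fin r) ℂ) :
    acsP (S - T) ≥ acsP (Eop N r φ S - Eop N r φ T) ∧
    acsP (Eop N r φ S - Eop N r φ T) ≥ ((r : ℝ) / N) * acsP (S - T) := by
  classical
  have hinj : Function.Injective φ := hφ.injective
  have hrN : r ≤ N := by simpa using Fintype.card_le_of_injective φ hinj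
  have hN : 0 < N := lt_of_lt_of_le hr hrN
  set C := S - T with hC
  have hsub : Eop N r φ S - Eop N r φ T = Eop N r φ C := by
    unfold Eop
    rw [hC, Matrix.mul_sub, Matrix.sub_mul]
  rw [hsub]
  obtain ⟨hsv1, hsv2⟩ := sv_Eop hrN hinj C
  have hsv_nonneg : ∀ {m : ℕ} (A : Matrix (Fin m) (Fin m) ℂ) (i : Fin m), 0 ≤ sv A i :=
    fun A i => Real.sqrt_nonneg _
  have hbdd : ∀ {m : ℕ} (C' : Matrix (Fin m) (Fin m) ℂ),
      BddBelow (Set.range fun i : Fin (m + 1) =>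
        (((i : ℕ) : ℝ) / m + if h : (i : ℕ) < m then sv C' ⟨(i : ℕ), h⟩ else 0)) :=
    fun C' => (Set.finite_range _).bddBelow
  have hterm_nonneg : ∀ {m : ℕ} (C' : Matrix (Fin m) (Fin m) ℂ) (i : Fin (m + 1)),
      0 ≤ (((i : ℕ) : ℝ) / m + if h : (i : ℕ) < m then sv C' ⟨(i : ℕ), h⟩ else 0) := by
    intro m C' i
    apply add_nonneg (by positivity)
    split
    · exact hsv_nonneg _ _
    · exact le_rfl
  have acsP_le : ∀ {m : ℕ} (C' : Matrix (Fin m) (Fin m) ℂ) (i : Fin (m + 1)),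
      acsP C' ≤ (((i : ℕ) : ℝ) / m + if h : (i : ℕ) < m then sv C' ⟨(i : ℕ), h⟩ else 0) :=
    fun C' i => ciInf_le (hbdd C') i
  have le_acsP : ∀ {m : ℕ} (C' : Matrix (Fin m) (Fin m) ℂ) (a : ℝ),
      (∀ i : Fin (m + 1),
        a ≤ (((i : ℕ) : ℝ) / m + if h : (i : ℕ) < m then sv C' ⟨(i : ℕ), h⟩ else 0)) →
      a ≤ acsP C' :=
    fun C' a h => le_ciInf h
  have hrne : (r : ℝ) ≠ 0 := by exact_mod_cast hr.ne'
  have hNpos : (0 : ℝ) < N := by exact_mod_cast hN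
  constructor
  · rw [ge_iff_le]
    refine le_acsP C _ fun j => ?_
    have hj : (j : ℕ) ≤ r := Nat.lt_succ_iff.mp j.2
    refine le_trans (acsP_le (Eop N r φ C) ⟨(j : ℕ), by omega⟩) ?_
    show ((j : ℕ) : ℝ) / N + (if h : (j : ℕ) < N then sv (Eop N r φ C) ⟨(j : ℕ), h⟩ else 0) ≤ _
    by_cases hjr : (j : ℕ) < r
    · have hjN : (j : ℕ) < N := lt_of_lt_of_le hjr hrN
      rw [dif_pos hjN, dif_pos hjr, hsv1 _ hjr]
      apply add_le_add_left
      apply div_le_div_of_nonneg_left (by positivity) (by exact_mod_cast hr)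
      exact_mod_cast hrN
    · have hz : (if h : (j : ℕ) < N then sv (Eop N r φ C) ⟨(j : ℕ), h⟩ else 0) = 0 := by
        split
        · exact hsv2 _ (le_of_not_gt hjr)
        · rfl
      have hjr' : (j : ℕ) = r := by omega
      rw [hz, dif_neg hjr, hjr', add_zero, add_zero, div_self hrne]
      rw [div_le_one hNpos]
      exact_mod_cast hrN
  · rw [ge_iff_le]
    have hacs_nonneg : 0 ≤ acsP C := le_acsP C 0 fun i => hterm_nonneg C i
    have hacs_le_one : acsP C ≤ 1 := by
      refine le_trans (acsP_le C ⟨r, lt_add_one r⟩) ?_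
      show ((r : ℕ) : ℝ) / r + (if h : r < r then sv C ⟨r, h⟩ else 0) ≤ 1
      rw [dif_neg (lt_irrefl r), add_zero, div_self hrne]
    have hrN0 : (0 : ℝ) ≤ (r : ℝ) / N := by positivity
    refine le_acsP (Eop N r φ C) _ fun i => ?_
    show _ ≤ ((i : ℕ) : ℝ) / N + (if h : (i : ℕ) < N then sv (Eop N r φ C) ⟨(i : ℕ), h⟩ else 0)
    by_cases hir : (i : ℕ) < r
    · have hiN : (i : ℕ) < N := lt_of_lt_of_le hir hrN
      have step1 : acsP C ≤ ((i : ℕ) : ℝ) / r + sv C ⟨(i : ℕ), hir⟩ := by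
        refine le_trans (acsP_le C ⟨(i : ℕ), by omega⟩) ?_
        show ((i : ℕ) : ℝ) / r + (if h : (i : ℕ) < r then sv C ⟨(i : ℕ), h⟩ else 0) ≤ _
        rw [dif_pos hir]
      have step2 : (r : ℝ) / N * acsP C ≤ (r : ℝ) / N * (((i : ℕ) : ℝ) / r + sv C ⟨(i : ℕ), hir⟩) :=
        mul_le_mul_of_nonneg_left step1 hrN0
      refine le_trans step2 ?_
      rw [dif_pos hiN, hsv1 _ hir]
      have hexp : (r : ℝ) / N * (((i : ℕ) : ℝ) / r + sv C ⟨(i : ℕ), hir⟩)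
          = ((i : ℕ) : ℝ) / N + (r : ℝ) / N * sv C ⟨(i : ℕ), hir⟩ := by
        field_simp
      rw [hexp]
      apply add_le_add_right
      apply mul_le_of_le_one_left (hsv_nonneg _ _)
      rw [div_le_one hNpos]
      exact_mod_cast hrN
    · have hstep : (r : ℝ) / N * acsP C ≤ (r : ℝ) / N := by
        calc (r : ℝ) / N * acsP C ≤ (r : ℝ) / N * 1 :=
              mul_le_mul_of_nonneg_left hacs_le_one hrN0
          _ = (r : ℝ) / N := mul_one _
      refine le_trans hstep ?_
      have h2 : (r : ℝ) / N ≤ ((i : ℕ) : ℝ) / N := by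
        gcongr
        exact_mod_cast (by omega : r ≤ (i : ℕ))
      refine le_trans h2 ?_
      apply le_add_of_nonneg_right
      split
      · exact hsv_nonneg _ _
      · exact le_rfl
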